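/- arXiv:1104.3832 — 2 statements merged into one kernel-verified Lean document; each statement's English description precedes it below -/
import Mathlib

section
/- Let ν ∈ [0,∞), g ∈ (0,∞), F ∈ (0,∞), E ∈ [0,∞), δ ∈ [0,∞), and assume g·E < F². Set W⁺ := F + √(F² − g·E), W⁻ := F − √(F² − g·E), and η(t) := exp((W⁺ − W⁻)·e_ν(t)) for t ∈ [0,∞). Define Tc ∈ (0,+∞] as follows: if ν > 0 and (W⁻ + g·δ)·e^{(W⁺−W⁻)/ν} ≤ W⁺ + g·δ, then Tc := +∞; if ν > 0 and (W⁻ + g·δ)·e^{(W⁺−W⁻)/ν} > W⁺ + g·δ, then Tc := −(1/ν)·log(1 − (ν/(W⁺−W⁻))·log((W⁺ + g·δ)/(W⁻ + g·δ))); if ν = 0 and W⁻ + g·δ > 0, then Tc := (1/(W⁺−W⁻))·log((W⁺ + g·δ)/(W⁻ + g·δ)); if ν = 0 and W⁻ + g·δ = 0, then Tc := +∞. Then for every t ∈ [0,Tc) one has (W⁺ + g·δ) − (W⁻ + g·δ)·η(t) > 0, and the function R : [0,Tc) → [0,∞) defined by R(t) := (1/g)·[W⁺·(W⁻ + g·δ)·η(t)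 − W⁻·(W⁺ + g·δ)]/[(W⁺ + g·δ) − (W⁻ + g·δ)·η(t)]·e^{−νt} is C¹, satisfies R(0) = δ, and satisfies R'(t) = −ν·R(t) + 2F·e^{−νt}·R(t) + g·R(t)² + E·e^{−2νt} for all t ∈ [0,Tc). -/
open Set

/-- `e_ν(t) := (1 − e^{−νt})/ν` for `ν > 0`, and `e_0(t) := t`. -/
noncomputable def eNu (ν t : ℝ) : ℝ :=
  if ν = 0 then t else (1 - Real.exp (-ν * t)) / ν

/-- `W⁺ := F + √(F² − gE)`. -/
noncomputable def Wplus (g F E : ℝ) : ℝ := F + Real.sqrt (F ^ 2 - g * E)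

/-- `W⁻ := F − √(F² − gE)`. -/
noncomputable def Wminus (g F E : ℝ) : ℝ := F - Real.sqrt (F ^ 2 - g * E)

/-- `η(t) := exp((W⁺ − W⁻)·e_ν(t))`. -/
noncomputable def eta7 (ν g F E t : ℝ) : ℝ :=
  Real.exp ((Wplus g F E - Wminus g F E) * eNu ν t)

/-- The critical time of Lemma 5.5 of the paper. -/
noncomputable def Tc7 (ν g F E δ : ℝ) : EReal :=
  if ν = 0 then
    (if Wminus g F E + g * δ = 0 then ⊤
     else ((1 / (Wplus g F E - Wminus g F E) *
       Real.log ((Wplus g F E + g * δ) / (Wminus g F E + g * δ)) : ℝ) : EReal))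
  else
    (if (Wminus g F E + g * δ) * Real.exp ((Wplus g F E - Wminus g F E) / ν)
        ≤ Wplus g F E + g * δ then ⊤
     else ((-(1 / ν) * Real.log (1 - ν / (Wplus g F E - Wminus g F E) *
       Real.log ((Wplus g F E + g * δ) / (Wminus g F E + g * δ))) : ℝ) : EReal))

/-- The explicit solution of Lemma 5.5(ii) of the paper. -/
noncomputable def R7 (ν g F E δ t : ℝ) : ℝ :=
  (1 / g) *
    ((Wplus g F E * (Wminus g F E + g * δ) * eta7 ν g F E t
        - Wminus g F E * (Wplus g F E + g * δ)) /
      ((Wplus g F E + g * δ) - (Wminus g F E + g * δ) * eta7 ν g F E t)) *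
    Real.exp (-ν * t)

lemma hasDerivAt_eNu (ν t : ℝ) : HasDerivAt (eNu ν) (Real.exp (-ν * t)) t := by
  by_cases h : ν = 0
  · subst h
    have he : eNu 0 = fun x : ℝ => x := by funext x; simp [eNu]
    rw [he]
    simpa using hasDerivAt_id' t
  · have he : eNu ν = fun x => (1 - Real.exp (-ν * x)) / ν := by funext x; simp [eNu, h]
    rw [he]
    have h1 : HasDerivAt (fun x : ℝ => -ν * x) (-ν) t := by
      simpa using (hasDerivAt_id t).const_mul (-ν)
    have h3 := ((hasDerivAt_const t (1:ℝ)).sub h1.exp).div_const ν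
    refine h3.congr_deriv ?_
    field_simp
    ring

lemma eNu_nonneg (ν t : ℝ) (hν : 0 ≤ ν) (ht : 0 ≤ t) : 0 ≤ eNu ν t := by
  rw [eNu]
  split_ifs with h
  · exact ht
  · have hν' : 0 < ν := lt_of_le_of_ne hν (Ne.symm h)
    apply div_nonneg _ hν'.le
    have : Real.exp (-ν * t) ≤ Real.exp 0 := Real.exp_le_exp.mpr (by nlinarith)
    rw [Real.exp_zero] at this
    linarith

set_option maxHeartbeats 1000000 in
/-- Lemma 5.5(ii) of the paper: the explicit solution of the control equation
`R' = −νR + 2F e^{−νt} R + gR² + E e^{−2νt}`, `R(0) = δ`, on `[0,Tc)`. -/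
theorem stmt7 (ν g F E δ : ℝ) (hν : 0 ≤ ν) (hg : 0 < g) (hF : 0 < F) (hE : 0 ≤ E)
    (hδ : 0 ≤ δ) (hEF : g * E < F ^ 2) :
    (∀ t : ℝ, 0 ≤ t → (t : EReal) < Tc7 ν g F E δ →
      0 < (Wplus g F E + g * δ) - (Wminus g F E + g * δ) * eta7 ν g F E t) ∧
    R7 ν g F E δ 0 = δ ∧
    (∀ t : ℝ, 0 ≤ t → (t : EReal) < Tc7 ν g F E δ →
      0 ≤ R7 ν g F E δ t ∧
      HasDerivWithinAt (fun τ => R7 ν g F E δ τ)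
        (-ν * R7 ν g F E δ t + 2 * F * Real.exp (-ν * t) * R7 ν g F E δ t
          + g * R7 ν g F E δ t ^ 2 + E * Real.exp (-2 * ν * t))
        {τ : ℝ | 0 ≤ τ ∧ (τ : EReal) < Tc7 ν g F E δ} t) := by
  have hgE : 0 ≤ g * E := mul_nonneg hg.le hE
  have hs2 : Real.sqrt (F ^ 2 - g * E) ^ 2 = F ^ 2 - g * E := Real.sq_sqrt (by nlinarith)
  have hspos : 0 < Real.sqrt (F ^ 2 - g * E) := Real.sqrt_pos.mpr (by nlinarith)
  have hsF : Real.sqrt (F ^ 2 - g * E) ≤ F := by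
    calc Real.sqrt (F ^ 2 - g * E) ≤ Real.sqrt (F ^ 2) := Real.sqrt_le_sqrt (by nlinarith)
      _ = F := by rw [Real.sqrt_sq hF.le]
  have haeq : Wplus g F E = F + Real.sqrt (F ^ 2 - g * E) := rfl
  have hbeq : Wminus g F E = F - Real.sqrt (F ^ 2 - g * E) := rfl
  have hA0 : 0 < Wplus g F E := by rw [haeq]; linarith
  have hB0 : 0 ≤ Wminus g F E := by rw [hbeq]; linarith
  have h2s : 0 < Wplus g F E - Wminus g F E := by rw [haeq, hbeq]; linarith
  have haδ : 0 < Wplus g F E + g * δ := by nlinarith [mul_nonneg hg.le hδ]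
  have hbδ0 : 0 ≤ Wminus g F E + g * δ := by nlinarith [mul_nonneg hg.le hδ]
  have hAB : Wplus g F E * Wminus g F E = g * E := by rw [haeq, hbeq]; nlinarith [hs2]
  have hsum : Wplus g F E + Wminus g F E = 2 * F := by rw [haeq, hbeq]; ring
  -- Positivity of the denominator on [0, Tc)
  have hpos : ∀ t : ℝ, 0 ≤ t → (t : EReal) < Tc7 ν g F E δ →
      (Wminus g F E + g * δ) * eta7 ν g F E t < Wplus g F E + g * δ := by
    intro t ht htc
    rw [Tc7] at htc
    by_cases hν0 : ν = 0
    · rw [if_pos hν0] at htc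
      subst hν0
      by_cases hb : Wminus g F E + g * δ = 0
      · rw [hb, zero_mul]; exact haδ
      · rw [if_neg hb] at htc
        have htc' : t < 1 / (Wplus g F E - Wminus g F E) *
            Real.log ((Wplus g F E + g * δ) / (Wminus g F E + g * δ)) := by
          exact_mod_cast htc
        have hbpos : 0 < Wminus g F E + g * δ := lt_of_le_of_ne hbδ0 (Ne.symm hb)
        have hlt : (Wplus g F E - Wminus g F E) * t <
            Real.log ((Wplus g F E + g * δ) / (Wminus g F E + g * δ)) := by
          have h := mul_lt_mul_of_pos_left htc' h2s
          rw [show (Wplus g F E - Wminus g F E) * (1 / (Wplus g F E - Wminus g F E) *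
              Real.log ((Wplus g F E + g * δ) / (Wminus g F E + g * δ)))
              = Real.log ((Wplus g F E + g * δ) / (Wminus g F E + g * δ)) from by
            field_simp] at h
          exact h
        have hηlt : eta7 0 g F E t < (Wplus g F E + g * δ) / (Wminus g F E + g * δ) := by
          rw [eta7, show eNu 0 t = t from by simp [eNu]]
          calc Real.exp ((Wplus g F E - Wminus g F E) * t)
              < Real.exp (Real.log ((Wplus g F E + g * δ) / (Wminus g F E + g * δ))) :=
                Real.exp_lt_exp.mpr hlt
            _ = (Wplus g F E + g * δ) / (Wminus g F E + g * δ) :=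
                Real.exp_log (div_pos haδ hbpos)
        calc (Wminus g F E + g * δ) * eta7 0 g F E t
            < (Wminus g F E + g * δ) * ((Wplus g F E + g * δ) / (Wminus g F E + g * δ)) :=
              (mul_lt_mul_iff_right₀ hbpos).mpr hηlt
          _ = Wplus g F E + g * δ := by field_simp
    · rw [if_neg hν0] at htc
      have hνpos : 0 < ν := lt_of_le_of_ne hν (Ne.symm hν0)
      have heNu_lt : eNu ν t < 1 / ν := by
        rw [eNu, if_neg hν0]
        have h1 : 1 - Real.exp (-ν * t) < 1 := by nlinarith [Real.exp_pos (-ν * t)]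
        exact (div_lt_div_iff_of_pos_right hνpos).mpr h1
      by_cases hcond : (Wminus g F E + g * δ) *
          Real.exp ((Wplus g F E - Wminus g F E) / ν) ≤ Wplus g F E + g * δ
      · by_cases hb : Wminus g F E + g * δ = 0
        · rw [hb, zero_mul]; exact haδ
        · have hbpos : 0 < Wminus g F E + g * δ := lt_of_le_of_ne hbδ0 (Ne.symm hb)
          have hη1 : eta7 ν g F E t < Real.exp ((Wplus g F E - Wminus g F E) / ν) := by
            rw [eta7]
            apply Real.exp_lt_exp.mpr
            calc (Wplus g F E - Wminus g F E) * eNu ν t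
                < (Wplus g F E - Wminus g F E) * (1 / ν) := (mul_lt_mul_iff_right₀ h2s).mpr heNu_lt
              _ = (Wplus g F E - Wminus g F E) / ν := by ring
          calc (Wminus g F E + g * δ) * eta7 ν g F E t
              < (Wminus g F E + g * δ) * Real.exp ((Wplus g F E - Wminus g F E) / ν) :=
                (mul_lt_mul_iff_right₀ hbpos).mpr hη1
            _ ≤ Wplus g F E + g * δ := hcond
      · rw [if_neg hcond] at htc
        push_neg at hcond
        have hbpos : 0 < Wminus g F E + g * δ := by
          rcases lt_or_eq_of_le hbδ0 with h | h
          · exact h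
          · exfalso; rw [← h, zero_mul] at hcond; linarith
        set L := Real.log ((Wplus g F E + g * δ) / (Wminus g F E + g * δ)) with hL
        have hLlt' : L * ν < Wplus g F E - Wminus g F E := by
          have hr : (Wplus g F E + g * δ) / (Wminus g F E + g * δ) <
              Real.exp ((Wplus g F E - Wminus g F E) / ν) := by
            rw [div_lt_iff₀ hbpos]; linarith [hcond]
          have := Real.log_lt_log (div_pos haδ hbpos) hr
          rw [Real.log_exp] at this
          rw [← lt_div_iff₀ hνpos] at *
          · exact this
        have hc0 : 0 < 1 - ν / (Wplus g F E - Wminus g F E) * L := by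
          have : ν / (Wplus g F E - Wminus g F E) * L < 1 := by
            rw [div_mul_eq_mul_div, div_lt_one h2s]
            nlinarith [hLlt']
          linarith
        have htc' : t < -(1 / ν) *
            Real.log (1 - ν / (Wplus g F E - Wminus g F E) * L) := by exact_mod_cast htc
        have h1 : Real.log (1 - ν / (Wplus g F E - Wminus g F E) * L) < -ν * t := by
          have h2 := mul_lt_mul_of_pos_left htc' hνpos
          rw [show ν * (-(1 / ν) *
              Real.log (1 - ν / (Wplus g F E - Wminus g F E) * L))
              = -Real.log (1 - ν / (Wplus g F E - Wminus g F E) * L) from by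
            field_simp] at h2
          linarith
        have hexp : 1 - ν / (Wplus g F E - Wminus g F E) * L < Real.exp (-ν * t) := by
          calc 1 - ν / (Wplus g F E - Wminus g F E) * L
              = Real.exp (Real.log (1 - ν / (Wplus g F E - Wminus g F E) * L)) :=
                (Real.exp_log hc0).symm
            _ < Real.exp (-ν * t) := Real.exp_lt_exp.mpr h1
        have heNu' : (Wplus g F E - Wminus g F E) * eNu ν t < L := by
          rw [eNu, if_neg hν0]
          have hstep : (Wplus g F E - Wminus g F E) * (1 - Real.exp (-ν * t)) < L * ν := by
            have h3 : 1 - Real.exp (-ν * t) < ν / (Wplus g F E - Wminus g F E) * L := by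
              linarith [hexp]
            have h4 := mul_lt_mul_of_pos_left h3 h2s
            rw [show (Wplus g F E - Wminus g F E) *
                (ν / (Wplus g F E - Wminus g F E) * L) = L * ν from by field_simp] at h4
            exact h4
          calc (Wplus g F E - Wminus g F E) * ((1 - Real.exp (-ν * t)) / ν)
              = (Wplus g F E - Wminus g F E) * (1 - Real.exp (-ν * t)) / ν := by ring
            _ < L := (div_lt_iff₀ hνpos).mpr hstep
        have hηlt : eta7 ν g F E t < (Wplus g F E + g * δ) / (Wminus g F E + g * δ) := by
          rw [eta7]
          calc Real.exp ((Wplus g F E - Wminus g F E) * eNu ν t)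
              < Real.exp L := Real.exp_lt_exp.mpr heNu'
            _ = (Wplus g F E + g * δ) / (Wminus g F E + g * δ) := by
                rw [hL]; exact Real.exp_log (div_pos haδ hbpos)
        calc (Wminus g F E + g * δ) * eta7 ν g F E t
            < (Wminus g F E + g * δ) * ((Wplus g F E + g * δ) / (Wminus g F E + g * δ)) :=
              (mul_lt_mul_iff_right₀ hbpos).mpr hηlt
          _ = Wplus g F E + g * δ := by field_simp
  refine ⟨fun t ht htc => by linarith [hpos t ht htc], ?_, ?_⟩
  · -- R(0) = δ
    have hη0 : eta7 ν g F E 0 = 1 := by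
      have : eNu ν 0 = 0 := by rw [eNu]; split_ifs <;> simp
      rw [eta7, this, mul_zero, Real.exp_zero]
    have hne : (Wplus g F E + g * δ) - (Wminus g F E + g * δ) ≠ 0 := by
      intro h; nlinarith
    rw [R7, hη0]
    rw [show (-ν * 0 : ℝ) = 0 from by ring, Real.exp_zero]
    field_simp
    ring
  · intro t ht htc
    have hD := hpos t ht htc
    have hDpos : 0 < (Wplus g F E + g * δ) - (Wminus g F E + g * δ) * eta7 ν g F E t := by
      linarith
    have hDne : (Wplus g F E + g * δ) - (Wminus g F E + g * δ) * eta7 ν g F E t ≠ 0 :=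
      hDpos.ne'
    have hη1 : 1 ≤ eta7 ν g F E t := by
      rw [eta7]
      have h0 : 0 ≤ (Wplus g F E - Wminus g F E) * eNu ν t :=
        mul_nonneg h2s.le (eNu_nonneg ν t hν ht)
      calc (1 : ℝ) = Real.exp 0 := Real.exp_zero.symm
        _ ≤ Real.exp _ := Real.exp_le_exp.mpr h0
    have hNnn : 0 ≤ Wplus g F E * (Wminus g F E + g * δ) * eta7 ν g F E t
        - Wminus g F E * (Wplus g F E + g * δ) := by
      nlinarith [mul_nonneg (mul_nonneg hA0.le hbδ0) (sub_nonneg.mpr hη1),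
        mul_nonneg (mul_nonneg hg.le hδ) h2s.le]
    constructor
    · rw [R7]
      apply mul_nonneg (mul_nonneg _ (div_nonneg hNnn hDpos.le)) (Real.exp_pos _).le
      positivity
    · -- the derivative
      have hη : HasDerivAt (fun τ => eta7 ν g F E τ)
          (eta7 ν g F E t * ((Wplus g F E - Wminus g F E) * Real.exp (-ν * t))) t := by
        have h := ((hasDerivAt_eNu ν t).const_mul (Wplus g F E - Wminus g F E)).exp
        exact h
      have hN : HasDerivAt
          (fun τ => Wplus g F E * (Wminus g F E + g * δ) * eta7 ν g F E τ
            - Wminus g F E * (Wplus g F E + g * δ))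
          (Wplus g F E * (Wminus g F E + g * δ) *
            (eta7 ν g F E t * ((Wplus g F E - Wminus g F E) * Real.exp (-ν * t)))) t :=
        (hη.const_mul _).sub_const _
      have hDf : HasDerivAt
          (fun τ => (Wplus g F E + g * δ) - (Wminus g F E + g * δ) * eta7 ν g F E τ)
          (-((Wminus g F E + g * δ) *
            (eta7 ν g F E t * ((Wplus g F E - Wminus g F E) * Real.exp (-ν * t))))) t :=
        (hη.const_mul _).const_sub _
      have hq := hN.div hDf hDne
      have hlin : HasDerivAt (fun τ : ℝ => -ν * τ) (-ν * 1) t := (hasDerivAt_id t).const_mul (-ν)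
      have hx := hlin.exp
      have hR := (hq.const_mul (1 / g)).mul hx
      have hfun : (fun τ => R7 ν g F E δ τ) = fun τ =>
          (1 / g) * ((Wplus g F E * (Wminus g F E + g * δ) * eta7 ν g F E τ
            - Wminus g F E * (Wplus g F E + g * δ)) /
            ((Wplus g F E + g * δ) - (Wminus g F E + g * δ) * eta7 ν g F E τ)) *
          Real.exp (-ν * τ) := by funext τ; rw [R7]
      rw [hfun]
      simp only [R7]
      refine hR.hasDerivWithinAt.congr_deriv ?_
      simp only [Pi.div_apply]
      rw [show Real.exp (-2 * ν * t) = Real.exp (-ν * t) * Real.exp (-ν * t) from by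
        rw [← Real.exp_add]; ring_nf]
      generalize hηg : eta7 ν g F E t = η at hDne ⊢
      generalize hAg : Wplus g F E = A at hDne hAB hsum ⊢
      generalize hBg : Wminus g F E = B at hDne hAB hsum ⊢
      rw [show E = A * B / g from by field_simp; linarith [hAB],
        show F = (A + B) / 2 from by linarith [hsum]]
      field_simp
      ring
end

section
/- Fix an integer d ≥ 2, ν ∈ [0,∞), T ∈ (0,+∞], and a finite set G ⊂ ℤ^d∖{0} with G = −G. Let f_k : [0,T) → ℂ^d (k ∈ G) be continuous, and let γ = (γ_k)_{k∈G} be a C¹ solution on [0,T) of the Galerkin component system dγ_k/dt = −ν|k|²γ_k − i(2π)^{−d/2} ∑_{h∈G} (γ_h·(k−h))·P_k γ_{k−h} + f_k (k ∈ G, γ_j := 0 for j ∉ G) such that for every t ∈ [0,T) and k ∈ G one has conj(γ_k(t)) = γ_{−k}(t) and k·γ_k(t) = 0. Then the continuous function N(t) := √(∑_{k∈G} |γ_k(t)|²) satisfies d⁺N/dt(t) ≤ −ν·N(t) + √(∑_{k∈G} |f_k(t)|²) for every t ∈ [0,T). -/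
open Filter Set Finset
open Topology

/-- `k·c := ∑_r k_r c_r` (no complex conjugation). -/
noncomputable def zcDot {d : ℕ} (k : Fin d → ℤ) (c : Fin d → ℂ) : ℂ := ∑ r, (k r : ℂ) * c r

/-- `|k|²`, the squared Euclidean norm of `k ∈ ℤ^d`. -/
def zNormSq {d : ℕ} (k : Fin d → ℤ) : ℤ := ∑ r, (k r) ^ 2

/-- `P_k c := c − (k·c)·k/|k|²`, the projection of `ℂ^d` onto the orthogonal
complement of `k`. -/
noncomputable def projPerp {d : ℕ} (k : Fin d → ℤ) (c : Fin d → ℂ) : Fin d → ℂ :=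
  fun r => c r - zcDot k c * (k r : ℂ) / (zNormSq k : ℂ)

/-- The right-hand side of the Galerkin component system:
`−ν|k|²γ_k − i(2π)^{−d/2} ∑_{h∈G} (γ_h·(k−h))·P_k γ_{k−h} + f_k`. -/
noncomputable def galRHS (d : ℕ) (ν : ℝ) (G : Finset (Fin d → ℤ))
    (f : (Fin d → ℤ) → ℝ → Fin d → ℂ) (γ : (Fin d → ℤ) → ℝ → Fin d → ℂ)
    (k : Fin d → ℤ) (t : ℝ) : Fin d → ℂ :=
  fun r =>
    -((ν : ℂ) * (zNormSq k : ℂ)) * γ k t r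
      - Complex.I * (((2 * Real.pi) ^ (-(d : ℝ) / 2) : ℝ) : ℂ) *
        ∑ h ∈ G, zcDot (k - h) (γ h t) * projPerp k (γ (k - h) t) r
      + f k t r

/-- Right upper Dini derivative: `limsup_{h → 0⁺} (f(t+h) − f(t))/h`, valued in `EReal`. -/
noncomputable def diniUpper (f : ℝ → ℝ) (t : ℝ) : EReal :=
  limsup (fun h : ℝ => (((f (t + h) - f t) / h : ℝ) : EReal)) (nhdsWithin 0 (Ioi 0))

lemma aux_slope_tendsto {F : Type*} [NormedAddCommGroup F] [NormedSpace ℝ F]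
    {f : ℝ → F} {L : F} {s : Set ℝ} {t : ℝ}
    (hf : HasDerivWithinAt f L s t) (hs : ∀ᶠ h in 𝓝[>] (0:ℝ), t + h ∈ s) :
    Tendsto (fun h : ℝ => h⁻¹ • (f (t + h) - f t)) (𝓝[>] 0) (𝓝 L) := by
  have hmap : Tendsto (fun h : ℝ => t + h) (𝓝[>] 0) (𝓝[s \ {t}] t) := by
    apply tendsto_nhdsWithin_of_tendsto_nhds_of_eventually_within
    · have h0 : Tendsto (fun h : ℝ => t + h) (𝓝 0) (𝓝 (t + 0)) :=
        ((continuous_const.add continuous_id).tendsto 0)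
      simpa using h0.mono_left nhdsWithin_le_nhds
    · filter_upwards [hs, self_mem_nhdsWithin] with h h1 h2
      exact ⟨h1, by simp [ne_of_gt (Set.mem_Ioi.mp h2)]⟩
  have := (hasDerivWithinAt_iff_tendsto_slope.mp hf).comp hmap
  refine this.congr fun h => ?_
  simp [Function.comp, slope_def_module]

lemma aux_dini_le {N : ℝ → ℝ} {t L B : ℝ}
    (h : Tendsto (fun h : ℝ => (N (t + h) - N t) / h) (𝓝[>] (0:ℝ)) (𝓝 L)) (hLB : L ≤ B) :
    diniUpper N t ≤ (B : EReal) := by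
  unfold diniUpper
  have h2 : Tendsto (fun h : ℝ => (((N (t + h) - N t) / h : ℝ) : EReal)) (𝓝[>] (0:ℝ)) (𝓝 (L : EReal)) :=
    (continuous_coe_real_ereal.tendsto _).comp h
  rw [h2.limsup_eq]
  exact_mod_cast hLB

lemma aux_event {T : EReal} {t : ℝ} (ht0 : 0 ≤ t) (htT : (t : EReal) < T) :
    ∀ᶠ h in 𝓝[>] (0:ℝ), (0 ≤ t + h ∧ ((t + h : ℝ) : EReal) < T) := by
  obtain ⟨u, hu1, hu2⟩ := EReal.exists_between_coe_real htT
  have hu : t < u := by exact_mod_cast hu1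
  filter_upwards [Ioo_mem_nhdsGT (by linarith : (0:ℝ) < u - t)] with h hh
  obtain ⟨h0, h1⟩ := hh
  refine ⟨by linarith, lt_trans ?_ hu2⟩
  exact_mod_cast (by linarith : t + h < u)

lemma aux_normSq_deriv {z : ℝ → ℂ} {z' : ℂ} {s : Set ℝ} {t : ℝ}
    (hz : HasDerivWithinAt z z' s t) :
    HasDerivWithinAt (fun τ => Complex.normSq (z τ)) (2 * ((starRingEnd ℂ) (z t) * z').re) s t := by
  have hre : HasDerivWithinAt (fun τ => (z τ).re) z'.re s t :=
    (Complex.reCLM.hasFDerivAt).comp_hasDerivWithinAt t hz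
  have him : HasDerivWithinAt (fun τ => (z τ).im) z'.im s t :=
    (Complex.imCLM.hasFDerivAt).comp_hasDerivWithinAt t hz
  have h2 := (hre.mul hre).add (him.mul him)
  have hfe : (fun τ => (z τ).re * (z τ).re + (z τ).im * (z τ).im)
      = fun τ => Complex.normSq (z τ) := by
    funext τ; rw [Complex.normSq_apply]
  have h2 : HasDerivWithinAt (fun τ => (z τ).re * (z τ).re + (z τ).im * (z τ).im) _ s t := h2
  rw [hfe] at h2
  convert h2 using 1
  simp [Complex.mul_re, Complex.conj_re, Complex.conj_im]
  ring


lemma zcDot_add_left {d : ℕ} (a b : Fin d → ℤ) (c : Fin d → ℂ) :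
    zcDot (a + b) c = zcDot a c + zcDot b c := by
  unfold zcDot
  rw [← Finset.sum_add_distrib]
  apply Finset.sum_congr rfl
  intro r _
  have : ((a + b) r : ℂ) = (a r : ℂ) + (b r : ℂ) := by push_cast; simp
  rw [this]; ring

lemma zcDot_neg_left {d : ℕ} (a : Fin d → ℤ) (c : Fin d → ℂ) :
    zcDot (-a) c = -zcDot a c := by
  unfold zcDot
  rw [← Finset.sum_neg_distrib]
  apply Finset.sum_congr rfl
  intro r _
  have : ((-a) r : ℂ) = -(a r : ℂ) := by push_cast; simp
  rw [this]; ring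

lemma aux_S_zero {d : ℕ} (G : Finset (Fin d → ℤ)) (hGsym : ∀ k ∈ G, -k ∈ G)
    (u : (Fin d → ℤ) → Fin d → ℂ) (hu0 : ∀ j, j ∉ G → u j = 0)
    (hdiv : ∀ k ∈ G, zcDot k (u k) = 0) :
    ∑ k ∈ G, ∑ h ∈ G, zcDot (k - h) (u h) * ∑ r, u (-k) r * u (k - h) r = 0 := by
  classical
  rw [← Finset.sum_product']
  set A : (Fin d → ℤ) × (Fin d → ℤ) → ℂ :=
    fun p => zcDot (p.1 - p.2) (u p.2) * ∑ r, u (-p.1) r * u (p.1 - p.2) r with hA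
  show ∑ p ∈ G ×ˢ G, A p = 0
  have hzero : ∀ p ∈ G ×ˢ G, A p ≠ 0 → p.1 - p.2 ∈ G := by
    intro p _ hne
    by_contra hno
    exact hne (by simp [hA, hu0 _ hno])
  rw [← Finset.sum_filter_of_ne hzero]
  have hpair : ∀ p ∈ (G ×ˢ G).filter (fun q => q.1 - q.2 ∈ G),
      A p + A (p.2 - p.1, p.2) = 0 := by
    intro p hp
    simp only [Finset.mem_filter, Finset.mem_product] at hp
    obtain ⟨⟨hk, hh⟩, hkh⟩ := hp
    have e1 : (p.2 - p.1) - p.2 = -p.1 := by ring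
    have e2 : -(p.2 - p.1) = p.1 - p.2 := by ring
    have hsum : ∑ r, u (p.1 - p.2) r * u (-p.1) r = ∑ r, u (-p.1) r * u (p.1 - p.2) r := by
      apply Finset.sum_congr rfl; intro r _; ring
    have hAs : A (p.2 - p.1, p.2)
        = zcDot (-p.1) (u p.2) * ∑ r, u (-p.1) r * u (p.1 - p.2) r := by
      simp only [hA, e1, e2]
      rw [hsum]
    have key : zcDot (p.1 - p.2) (u p.2) + zcDot (-p.1) (u p.2) = 0 := by
      rw [← zcDot_add_left]
      have : p.1 - p.2 + -p.1 = -p.2 := by ring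
      rw [this, zcDot_neg_left, hdiv _ hh, neg_zero]
    have hc := congrArg (· * ∑ r, u (-p.1) r * u (p.1 - p.2) r) key
    rw [hAs]
    simpa [add_mul] using hc
  refine Finset.sum_involution (fun p _ => (p.2 - p.1, p.2)) hpair ?_ ?_ ?_
  · intro p hp hne hfix
    have h0 := hpair p hp
    rw [show ((p.2 - p.1, p.2) : (Fin d → ℤ) × (Fin d → ℤ)) = p from hfix] at h0
    exact hne (add_self_eq_zero.mp h0)
  · intro p hp
    simp only [Finset.mem_filter, Finset.mem_product] at hp ⊢
    obtain ⟨⟨hk, hh⟩, hkh⟩ := hp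
    refine ⟨⟨?_, hh⟩, ?_⟩
    · have : p.2 - p.1 = -(p.1 - p.2) := by ring
      rw [this]; exact hGsym _ hkh
    · have : (p.2 - p.1) - p.2 = -p.1 := by ring
      rw [this]; exact hGsym _ hk
  · intro p hp
    have : p.2 - (p.2 - p.1) = p.1 := by ring
    simp [this]

lemma aux_proj {d : ℕ} (k : Fin d → ℤ) (w : Fin d → ℂ) (c : Fin d → ℂ)
    (hw : zcDot k w = 0) :
    ∑ r, w r * projPerp k c r = ∑ r, w r * c r := by
  unfold projPerp
  have : ∀ r, w r * (c r - zcDot k c * (k r : ℂ) / (zNormSq k : ℂ))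
      = w r * c r - zcDot k c / (zNormSq k : ℂ) * ((k r : ℂ) * w r) := by
    intro r; ring
  simp only [this]
  rw [Finset.sum_sub_distrib, ← Finset.mul_sum]
  rw [show (∑ r, (k r : ℂ) * w r) = zcDot k w from rfl, hw, mul_zero, sub_zero]

lemma aux_CS {ι : Type*} (s : Finset ι) (a b : ι → ℝ) (ha : ∀ i, 0 ≤ a i) (hb : ∀ i, 0 ≤ b i) :
    ∑ i ∈ s, Real.sqrt (a i) * Real.sqrt (b i)
      ≤ Real.sqrt (∑ i ∈ s, a i) * Real.sqrt (∑ i ∈ s, b i) := by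
  have h := Finset.sum_mul_sq_le_sq_mul_sq s (fun i => Real.sqrt (a i)) (fun i => Real.sqrt (b i))
  simp only [Real.sq_sqrt (ha _), Real.sq_sqrt (hb _)] at h
  have h1 : ∑ i ∈ s, Real.sqrt (a i) * Real.sqrt (b i)
      = Real.sqrt ((∑ i ∈ s, Real.sqrt (a i) * Real.sqrt (b i)) ^ 2) := by
    rw [Real.sqrt_sq (Finset.sum_nonneg fun i _ =>
      mul_nonneg (Real.sqrt_nonneg _) (Real.sqrt_nonneg _))]
  rw [h1, ← Real.sqrt_mul (Finset.sum_nonneg fun i _ => ha i)]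
  exact Real.sqrt_le_sqrt h
set_option maxHeartbeats 2000000 in
/-- Step 3 of Appendix B of the paper: the L² norm of the Galerkin approximant
satisfies `d⁺N/dt ≤ −νN + ‖f‖_{L²}`. -/
theorem stmt12 (d : ℕ) (hd : 2 ≤ d) (ν : ℝ) (hν : 0 ≤ ν) (T : EReal) (hT : 0 < T)
    (G : Finset (Fin d → ℤ)) (hG0 : (0 : Fin d → ℤ) ∉ G) (hGsym : ∀ k ∈ G, -k ∈ G)
    (f : (Fin d → ℤ) → ℝ → Fin d → ℂ)
    (hfc : ∀ k ∈ G, ContinuousOn (f k) {t : ℝ | 0 ≤ t ∧ (t : EReal) < T})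
    (γ : (Fin d → ℤ) → ℝ → Fin d → ℂ)
    (hγ0 : ∀ j, j ∉ G → ∀ t : ℝ, γ j t = 0)
    (hODE : ∀ k ∈ G, ∀ t : ℝ, 0 ≤ t → (t : EReal) < T →
      HasDerivWithinAt (γ k) (galRHS d ν G f γ k t) {τ : ℝ | 0 ≤ τ ∧ (τ : EReal) < T} t)
    (hconj : ∀ k ∈ G, ∀ t : ℝ, 0 ≤ t → (t : EReal) < T →
      ∀ r, (starRingEnd ℂ) (γ k t r) = γ (-k) t r)
    (hdiv : ∀ k ∈ G, ∀ t : ℝ, 0 ≤ t → (t : EReal) < T → zcDot k (γ k t) = 0) :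
    ∀ t : ℝ, 0 ≤ t → (t : EReal) < T →
      diniUpper (fun τ => Real.sqrt (∑ k ∈ G, ∑ r, Complex.normSq (γ k τ r))) t ≤
        ((-ν * Real.sqrt (∑ k ∈ G, ∑ r, Complex.normSq (γ k t r))
          + Real.sqrt (∑ k ∈ G, ∑ r, Complex.normSq (f k t r)) : ℝ) : EReal) := by
  intro t ht0 htT
  classical
  have hev : ∀ᶠ h in 𝓝[>] (0:ℝ), t + h ∈ {τ : ℝ | 0 ≤ τ ∧ (τ : EReal) < T} := aux_event ht0 htT
  -- component derivatives
  have hcomp : ∀ k ∈ G, ∀ r, HasDerivWithinAt (fun τ => γ k τ r) (galRHS d ν G f γ k t r)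
      {τ : ℝ | 0 ≤ τ ∧ (τ : EReal) < T} t := by
    intro k hk r
    have := (ContinuousLinearMap.proj (R := ℝ) (φ := fun _ : Fin d => ℂ)
      r).hasFDerivAt.comp_hasDerivWithinAt t (hODE k hk t ht0 htT)
    exact this
  -- energy derivative
  have hE : HasDerivWithinAt (fun τ => ∑ k ∈ G, ∑ r, Complex.normSq (γ k τ r))
      (∑ k ∈ G, ∑ r, 2 * ((starRingEnd ℂ) (γ k t r) * galRHS d ν G f γ k t r).re)
      {τ : ℝ | 0 ≤ τ ∧ (τ : EReal) < T} t := by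
    refine HasDerivWithinAt.fun_sum fun k hk => HasDerivWithinAt.fun_sum fun r _ => ?_
    exact aux_normSq_deriv (hcomp k hk r)
  set E' : ℝ := ∑ k ∈ G, ∑ r, 2 * ((starRingEnd ℂ) (γ k t r) * galRHS d ν G f γ k t r).re with hE'
  set Et : ℝ := ∑ k ∈ G, ∑ r, Complex.normSq (γ k t r) with hEt
  set Ft : ℝ := ∑ k ∈ G, ∑ r, Complex.normSq (f k t r) with hFt
  have hEt0 : 0 ≤ Et := Finset.sum_nonneg fun k _ =>
    Finset.sum_nonneg fun r _ => Complex.normSq_nonneg _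
  have hFt0 : 0 ≤ Ft := Finset.sum_nonneg fun k _ =>
    Finset.sum_nonneg fun r _ => Complex.normSq_nonneg _
  -- the key energy inequality
  have hbound : E' ≤ 2 * (-ν * Et + Real.sqrt Et * Real.sqrt Ft) := by
    set c₀ : ℝ := (2 * Real.pi) ^ (-(d:ℝ)/2) with hc₀
    set W : (Fin d → ℤ) → Fin d → ℂ :=
      fun k r => ∑ h ∈ G, zcDot (k - h) (γ h t) * projPerp k (γ (k - h) t) r with hW
    have hdecomp : ∀ k ∈ G, ∀ r : Fin d,
        2 * ((starRingEnd ℂ) (γ k t r) * galRHS d ν G f γ k t r).re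
        = (-(2 * ν * (zNormSq k : ℝ))) * Complex.normSq (γ k t r)
          - 2 * ((starRingEnd ℂ) (γ k t r) * (Complex.I * (c₀:ℂ) * W k r)).re
          + 2 * ((starRingEnd ℂ) (γ k t r) * f k t r).re := by
      intro k hk r
      have hg : galRHS d ν G f γ k t r
          = -((ν:ℂ) * (zNormSq k : ℂ)) * γ k t r - Complex.I * (c₀:ℂ) * W k r + f k t r := rfl
      rw [hg]
      have hsp : (starRingEnd ℂ) (γ k t r)
            * (-((ν:ℂ) * (zNormSq k:ℂ)) * γ k t r - Complex.I * (c₀:ℂ) * W k r + f k t r)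
          = (starRingEnd ℂ) (γ k t r) * (-((ν:ℂ) * (zNormSq k:ℂ)) * γ k t r)
            - (starRingEnd ℂ) (γ k t r) * (Complex.I * (c₀:ℂ) * W k r)
            + (starRingEnd ℂ) (γ k t r) * f k t r := by ring
      rw [hsp, Complex.add_re, Complex.sub_re]
      have h1 : (starRingEnd ℂ) (γ k t r) * (-((ν:ℂ) * (zNormSq k:ℂ)) * γ k t r)
          = ((-(ν * (zNormSq k : ℝ) * Complex.normSq (γ k t r)) : ℝ) : ℂ) := by
        have h2 : (starRingEnd ℂ) (γ k t r) * γ k t r = (Complex.normSq (γ k t r) : ℂ) := by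
          rw [mul_comm, Complex.mul_conj]
        calc (starRingEnd ℂ) (γ k t r) * (-((ν:ℂ) * (zNormSq k:ℂ)) * γ k t r)
            = -((ν:ℂ) * (zNormSq k:ℂ)) * ((starRingEnd ℂ) (γ k t r) * γ k t r) := by ring
          _ = -((ν:ℂ) * (zNormSq k:ℂ)) * (Complex.normSq (γ k t r) : ℂ) := by rw [h2]
          _ = ((-(ν * (zNormSq k : ℝ) * Complex.normSq (γ k t r)) : ℝ) : ℂ) := by
              push_cast; ring
      rw [h1, Complex.ofReal_re]
      ring
    have hB : ∑ k ∈ G, ∑ r, 2 * ((starRingEnd ℂ) (γ k t r) * (Complex.I * (c₀:ℂ) * W k r)).re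
        = 0 := by
      have hgamma0 : ∀ j, j ∉ G → γ j t = 0 := fun j hj => hγ0 j hj t
      have hdiv' : ∀ k ∈ G, zcDot k (γ k t) = 0 := fun k hk => hdiv k hk t ht0 htT
      have hS := aux_S_zero G hGsym (fun j => γ j t) hgamma0 hdiv'
      have hinner : ∀ k ∈ G, ∑ r, (starRingEnd ℂ) (γ k t r) * W k r
          = ∑ h ∈ G, zcDot (k - h) (γ h t) * ∑ r, γ (-k) t r * γ (k - h) t r := by
        intro k hk
        have hc : ∀ r, (starRingEnd ℂ) (γ k t r) = γ (-k) t r := hconj k hk t ht0 htT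
        have hw : zcDot k (γ (-k) t) = 0 := by
          have h1 := hdiv (-k) (hGsym k hk) t ht0 htT
          have h2 := zcDot_neg_left (-k) (γ (-k) t)
          rw [neg_neg] at h2
          rw [h2, h1, neg_zero]
        calc ∑ r, (starRingEnd ℂ) (γ k t r) * W k r
            = ∑ r, ∑ h ∈ G, zcDot (k - h) (γ h t) * (γ (-k) t r * projPerp k (γ (k - h) t) r) := by
              apply Finset.sum_congr rfl; intro r _
              rw [hc r, hW]
              rw [Finset.mul_sum]
              apply Finset.sum_congr rfl; intro h _; ring
          _ = ∑ h ∈ G, zcDot (k - h) (γ h t) * ∑ r, γ (-k) t r * projPerp k (γ (k - h) t) r := by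
              rw [Finset.sum_comm]
              apply Finset.sum_congr rfl; intro h _
              rw [Finset.mul_sum]
          _ = ∑ h ∈ G, zcDot (k - h) (γ h t) * ∑ r, γ (-k) t r * γ (k - h) t r := by
              apply Finset.sum_congr rfl; intro h _
              rw [aux_proj k (γ (-k) t) (γ (k - h) t) hw]
      have hcsum : ∑ k ∈ G, ∑ r, (starRingEnd ℂ) (γ k t r) * (Complex.I * (c₀:ℂ) * W k r)
          = 0 := by
        have step1 : ∀ k ∈ G, ∑ r, (starRingEnd ℂ) (γ k t r) * (Complex.I * (c₀:ℂ) * W k r)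
            = Complex.I * (c₀:ℂ) * ∑ r, (starRingEnd ℂ) (γ k t r) * W k r := by
          intro k _
          rw [Finset.mul_sum]
          apply Finset.sum_congr rfl; intro r _; ring
        rw [Finset.sum_congr rfl step1]
        have step2 : ∑ k ∈ G, Complex.I * (c₀:ℂ) * ∑ r, (starRingEnd ℂ) (γ k t r) * W k r
            = Complex.I * (c₀:ℂ) *
              ∑ k ∈ G, ∑ h ∈ G, zcDot (k - h) (γ h t) * ∑ r, γ (-k) t r * γ (k - h) t r := by
          rw [Finset.mul_sum]
          apply Finset.sum_congr rfl; intro k hk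
          rw [hinner k hk]
        rw [step2, hS, mul_zero]
      have step3 : ∑ k ∈ G, ∑ r, 2 * ((starRingEnd ℂ) (γ k t r) * (Complex.I * (c₀:ℂ) * W k r)).re
          = 2 * (∑ k ∈ G, ∑ r, (starRingEnd ℂ) (γ k t r) * (Complex.I * (c₀:ℂ) * W k r)).re := by
        simp only [← Finset.mul_sum, Complex.re_sum]
      rw [step3, hcsum]
      simp
    have hC : ∑ k ∈ G, ∑ r, 2 * ((starRingEnd ℂ) (γ k t r) * f k t r).re
        ≤ 2 * (Real.sqrt Et * Real.sqrt Ft) := by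
      have hpt : ∀ (k : Fin d → ℤ) (r : Fin d), ((starRingEnd ℂ) (γ k t r) * f k t r).re
          ≤ Real.sqrt (Complex.normSq (γ k t r)) * Real.sqrt (Complex.normSq (f k t r)) := by
        intro k r
        calc ((starRingEnd ℂ) (γ k t r) * f k t r).re
            ≤ ‖(starRingEnd ℂ) (γ k t r) * f k t r‖ := Complex.re_le_norm _
          _ = ‖γ k t r‖ * ‖f k t r‖ := by
              rw [norm_mul, Complex.norm_conj]
          _ = _ := by rw [Complex.norm_def, Complex.norm_def]
      have h1 : ∑ k ∈ G, ∑ r, 2 * ((starRingEnd ℂ) (γ k t r) * f k t r).re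
          ≤ 2 * ∑ k ∈ G, ∑ r,
            Real.sqrt (Complex.normSq (γ k t r)) * Real.sqrt (Complex.normSq (f k t r)) := by
        rw [Finset.mul_sum]
        refine Finset.sum_le_sum fun k _ => ?_
        rw [Finset.mul_sum]
        refine Finset.sum_le_sum fun r _ => ?_
        linarith [hpt k r]
      refine h1.trans ?_
      have h2 : ∑ k ∈ G, ∑ r,
          Real.sqrt (Complex.normSq (γ k t r)) * Real.sqrt (Complex.normSq (f k t r))
          = ∑ p ∈ G ×ˢ (Finset.univ : Finset (Fin d)),
            Real.sqrt (Complex.normSq (γ p.1 t p.2)) * Real.sqrt (Complex.normSq (f p.1 t p.2)) := by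
        rw [Finset.sum_product]
      have h3 : Et = ∑ p ∈ G ×ˢ (Finset.univ : Finset (Fin d)), Complex.normSq (γ p.1 t p.2) := by
        rw [hEt, Finset.sum_product]
      have h4 : Ft = ∑ p ∈ G ×ˢ (Finset.univ : Finset (Fin d)), Complex.normSq (f p.1 t p.2) := by
        rw [hFt, Finset.sum_product]
      rw [h2, h3, h4]
      have := aux_CS (G ×ˢ (Finset.univ : Finset (Fin d)))
        (fun p => Complex.normSq (γ p.1 t p.2)) (fun p => Complex.normSq (f p.1 t p.2))
        (fun p => Complex.normSq_nonneg _) (fun p => Complex.normSq_nonneg _)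
      linarith
    have hk1 : ∀ k ∈ G, (1:ℝ) ≤ (zNormSq k : ℝ) := by
      intro k hk
      have hkne : k ≠ 0 := fun h => hG0 (h ▸ hk)
      obtain ⟨r0, hr0⟩ := Function.ne_iff.mp hkne
      have h1 : (1:ℤ) ≤ zNormSq k := by
        have h2 : (1:ℤ) ≤ (k r0)^2 := by
          have h3 := Int.one_le_abs (by simpa using hr0)
          nlinarith [h3, abs_nonneg (k r0), sq_abs (k r0)]
        calc (1:ℤ) ≤ (k r0)^2 := h2
          _ ≤ ∑ r, (k r)^2 :=
            Finset.single_le_sum (f := fun r => (k r)^2) (fun r _ => sq_nonneg _)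
              (Finset.mem_univ r0)
      exact_mod_cast h1
    have hAle : ∑ k ∈ G, ∑ r, (-(2 * ν * (zNormSq k : ℝ))) * Complex.normSq (γ k t r)
        ≤ -2 * ν * Et := by
      have hrhs : -2 * ν * Et = ∑ k ∈ G, ∑ r, (-2 * ν) * Complex.normSq (γ k t r) := by
        rw [hEt]
        simp only [Finset.mul_sum]
      rw [hrhs]
      refine Finset.sum_le_sum fun k hk => Finset.sum_le_sum fun r _ => ?_
      have h5 := hk1 k hk
      nlinarith [mul_nonneg (mul_nonneg hν (sub_nonneg.mpr h5))
        (Complex.normSq_nonneg (γ k t r))]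
    have hsplit : E' = (∑ k ∈ G, ∑ r, (-(2 * ν * (zNormSq k : ℝ))) * Complex.normSq (γ k t r))
        - (∑ k ∈ G, ∑ r, 2 * ((starRingEnd ℂ) (γ k t r) * (Complex.I * (c₀:ℂ) * W k r)).re)
        + ∑ k ∈ G, ∑ r, 2 * ((starRingEnd ℂ) (γ k t r) * f k t r).re := by
      rw [hE']
      rw [← Finset.sum_sub_distrib, ← Finset.sum_add_distrib]
      apply Finset.sum_congr rfl; intro k hk
      rw [← Finset.sum_sub_distrib, ← Finset.sum_add_distrib]
      apply Finset.sum_congr rfl; intro r _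
      exact hdecomp k hk r
    rw [hsplit, hB, sub_zero]
    calc (∑ k ∈ G, ∑ r, (-(2 * ν * (zNormSq k : ℝ))) * Complex.normSq (γ k t r))
          + ∑ k ∈ G, ∑ r, 2 * ((starRingEnd ℂ) (γ k t r) * f k t r).re
        ≤ -2 * ν * Et + 2 * (Real.sqrt Et * Real.sqrt Ft) := add_le_add hAle hC
      _ = 2 * (-ν * Et + Real.sqrt Et * Real.sqrt Ft) := by ring
  rcases hEt0.lt_or_eq with hpos | h0
  · -- positive energy: N is differentiable, use chain rule
    have hsq := hE.sqrt
      (show (∑ k ∈ G, ∑ r, Complex.normSq (γ k t r)) ≠ 0 from hpos.ne')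
    have hL : E' / (2 * Real.sqrt Et) ≤ -ν * Real.sqrt Et + Real.sqrt Ft := by
      rw [div_le_iff₀ (by positivity)]
      nlinarith [hbound, Real.sqrt_nonneg Et, Real.sqrt_nonneg Ft,
        Real.mul_self_sqrt hEt0]
    have hslope := aux_slope_tendsto hsq hev
    have hslope' : Tendsto (fun h : ℝ =>
        ((fun τ => Real.sqrt (∑ k ∈ G, ∑ r, Complex.normSq (γ k τ r))) (t + h)
          - (fun τ => Real.sqrt (∑ k ∈ G, ∑ r, Complex.normSq (γ k τ r))) t) / h)
        (𝓝[>] (0:ℝ)) (𝓝 (E' / (2 * Real.sqrt Et))) := by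
      refine hslope.congr fun h => ?_
      rw [smul_eq_mul, div_eq_inv_mul]
    refine aux_dini_le ?_ hL
    exact hslope'
  · -- zero energy: γ(t) = 0
    have hγt : ∀ j, γ j t = 0 := by
      intro j
      by_cases hj : j ∈ G
      · funext r
        have h1 : ∀ k ∈ G, (∑ r, Complex.normSq (γ k t r)) = 0 :=
          (Finset.sum_eq_zero_iff_of_nonneg fun k _ =>
            Finset.sum_nonneg fun r _ => Complex.normSq_nonneg _).mp h0.symm
        have h2 : Complex.normSq (γ j t r) = 0 :=
          (Finset.sum_eq_zero_iff_of_nonneg fun r _ => Complex.normSq_nonneg _).mp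
            (h1 j hj) r (Finset.mem_univ r)
        simpa using Complex.normSq_eq_zero.mp h2
      · exact hγ0 j hj t
    have hNt : Real.sqrt (∑ k ∈ G, ∑ r, Complex.normSq (γ k t r)) = 0 := by
      rw [← hEt, ← h0, Real.sqrt_zero]
    have hgal : ∀ k, galRHS d ν G f γ k t = f k t := by
      intro k
      funext r
      simp [galRHS, hγt, zcDot]
    have hsl : ∀ k ∈ G, ∀ r, Tendsto (fun h : ℝ => h⁻¹ • (γ k (t + h) r - γ k t r))
        (𝓝[>] (0:ℝ)) (𝓝 (f k t r)) := by
      intro k hk r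
      have h1 := hcomp k hk r
      rw [hgal k] at h1
      exact aux_slope_tendsto h1 hev
    have hsum : Tendsto (fun h : ℝ =>
        ∑ k ∈ G, ∑ r, Complex.normSq (h⁻¹ • (γ k (t + h) r - γ k t r)))
        (𝓝[>] (0:ℝ)) (𝓝 Ft) := by
      rw [hFt]
      exact tendsto_finset_sum _ fun k hk => tendsto_finset_sum _ fun r _ =>
        (Complex.continuous_normSq.tendsto _).comp (hsl k hk r)
    have hsqt : Tendsto (fun h : ℝ =>
        Real.sqrt (∑ k ∈ G, ∑ r, Complex.normSq (h⁻¹ • (γ k (t + h) r - γ k t r))))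
        (𝓝[>] (0:ℝ)) (𝓝 (Real.sqrt Ft)) :=
      (Real.continuous_sqrt.tendsto _).comp hsum
    have heq : ∀ᶠ h in 𝓝[>] (0:ℝ),
        Real.sqrt (∑ k ∈ G, ∑ r, Complex.normSq (h⁻¹ • (γ k (t + h) r - γ k t r)))
        = ((fun τ => Real.sqrt (∑ k ∈ G, ∑ r, Complex.normSq (γ k τ r))) (t + h)
            - (fun τ => Real.sqrt (∑ k ∈ G, ∑ r, Complex.normSq (γ k τ r))) t) / h := by
      filter_upwards [self_mem_nhdsWithin] with h hh
      have hh0 : (0:ℝ) < h := hh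
      have e1 : ∀ (k : Fin d → ℤ) (r : Fin d),
          Complex.normSq (h⁻¹ • (γ k (t + h) r - γ k t r))
          = h⁻¹ * h⁻¹ * Complex.normSq (γ k (t + h) r) := by
        intro k r
        rw [hγt k]
        simp [Complex.real_smul, map_mul, Complex.normSq_ofReal]
      simp only [e1, ← Finset.mul_sum]
      rw [Real.sqrt_mul (mul_nonneg (inv_nonneg.mpr hh0.le) (inv_nonneg.mpr hh0.le)),
        Real.sqrt_mul_self (inv_nonneg.mpr hh0.le)]
      show h⁻¹ * Real.sqrt (∑ k ∈ G, ∑ r, Complex.normSq (γ k (t + h) r))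
          = (Real.sqrt (∑ k ∈ G, ∑ r, Complex.normSq (γ k (t + h) r))
              - Real.sqrt (∑ k ∈ G, ∑ r, Complex.normSq (γ k t r))) / h
      rw [hNt, sub_zero, div_eq_inv_mul]
    have hfinal : Tendsto (fun h : ℝ =>
        ((fun τ => Real.sqrt (∑ k ∈ G, ∑ r, Complex.normSq (γ k τ r))) (t + h)
          - (fun τ => Real.sqrt (∑ k ∈ G, ∑ r, Complex.normSq (γ k τ r))) t) / h)
        (𝓝[>] (0:ℝ)) (𝓝 (Real.sqrt Ft)) := hsqt.congr' heq
    refine aux_dini_le (L := Real.sqrt Ft) ?_ ?_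
    · exact hfinal
    rw [hNt]
    simp
end
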